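/- Let G be a finite group, N ⊴ G a π-group for a set of primes π, θ ∈ Irr(N) G-invariant, and for each g ∈ G with g_π ∈ N let θ_g be the canonical extension of θ to N⟨g⟩ (the unique extension with the same determinantal order as θ); define θ̂(g) = θ_g(g) and θ̂(x) = 0 if x_π ∉ N. Then for every subgroup H with N ≤ H ≤ G and H/N a π'-group, the restriction θ̂_H equals the canonical extension of θ to H. -/

import Mathlib

open scoped BigOperators
noncomputable section

open Classical in
/-- The `π`-part of a natural number: the product of prime powers in its
factorization whose primes lie in `π`. -/
def Nat.piPart (π : Set ℕ) (n : ℕ) : ℕ :=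
  n.factorization.prod fun p k => if p ∈ π then p ^ k else 1

/-- `n` is a `π`-number if every prime dividing `n` lies in `π`. -/
def IsPiNumber (π : Set ℕ) (n : ℕ) : Prop :=
  ∀ p : ℕ, p.Prime → p ∣ n → p ∈ π

/-- The `π`-part of an element of a finite group: the unique power of `g`
whose order is a `π`-number and whose complementary part has `π'`-order. -/
def elemPiPart (π : Set ℕ) {G : Type} [Group G] (g : G) : G :=
  g ^ ((orderOf g / Nat.piPart π (orderOf g)) ^ Nat.totient (Nat.piPart π (orderOf g)))

/-- `χ` is the character of some finite-dimensional complex representation of `G`. -/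
def IsChar (G : Type) [Group G] (χ : G → ℂ) : Prop :=
  ∃ V : FDRep ℂ G, ∀ g : G, χ g = V.character g

/-- The usual inner product of complex class functions. -/
def charInner (G : Type) [Group G] (φ ψ : G → ℂ) : ℂ :=
  (Nat.card G : ℂ)⁻¹ * ∑ᶠ g : G, φ g * starRingEnd ℂ (ψ g)

/-- An irreducible character: a character of norm one. -/
def IsIrrChar (G : Type) [Group G] (χ : G → ℂ) : Prop :=
  IsChar G χ ∧ charInner G χ χ = 1

/-- A class function. -/
def IsClassFun (G : Type) [Group G] (φ : G → ℂ) : Prop :=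
  ∀ g h : G, φ (h * g * h⁻¹) = φ g

/-- A virtual (generalized) character: a difference of two characters. -/
def IsGenChar (G : Type) [Group G] (ψ : G → ℂ) : Prop :=
  ∃ α β : G → ℂ, IsChar G α ∧ IsChar G β ∧ ψ = α - β

/-- `θ`, a character of the normal subgroup `N` of `G`, is `G`-invariant. -/
def IsGInvariant {G : Type} [Group G] (N : Subgroup G) [hN : N.Normal]
    (θ : ↥N → ℂ) : Prop :=
  ∀ (g : G) (n : ↥N), θ ⟨g * (n : G) * g⁻¹, hN.conj_mem (n : G) n.2 g⟩ = θ n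

/-- π-defect zero irreducible characters of a group `Q`. -/
def dzSet (π : Set ℕ) (Q : Type) [Group Q] : Set (Q → ℂ) :=
  {χ | IsIrrChar Q χ ∧ ∃ d : ℕ, χ 1 = (d : ℂ) ∧
    Nat.piPart π d = Nat.piPart π (Nat.card Q)}

/-- Irreducible characters of `G` lying over `θ ∈ Irr N` of relative π-defect zero. -/
def rdzSet (π : Set ℕ) (G : Type) [Group G] (N : Subgroup G) (θ : ↥N → ℂ) :
    Set (G → ℂ) :=
  {χ | IsIrrChar G χ ∧ charInner ↥N (fun n : ↥N => χ (n : G)) θ ≠ 0 ∧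
    ∃ m : ℕ, χ 1 = θ 1 * (m : ℂ) ∧ Nat.piPart π m = Nat.piPart π N.index}


/-- The determinantal order of a finite-dimensional complex representation:
the smallest positive `m` with `det(ρ h)^m = 1` for all `h`. -/
def detOrder {H : Type} [Group H] (V : FDRep ℂ H) : ℕ :=
  sInf {m | 0 < m ∧ ∀ h : H, (LinearMap.det (V.ρ h)) ^ m = 1}

/-- `φ` is the canonical extension of `θ` to `H`: a character of `H` extending `θ`
whose determinantal order equals that of `θ`. -/
def IsCanonicalExtension {G : Type} [Group G] {N H : Subgroup G} (hNH : N ≤ H)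
    (θ : ↥N → ℂ) (φ : ↥H → ℂ) : Prop :=
  (∀ n : ↥N, φ (Subgroup.inclusion hNH n) = θ n) ∧
  ∃ (V : FDRep ℂ ↥H) (W : FDRep ℂ ↥N), (∀ h, φ h = V.character h) ∧
    (∀ n, θ n = W.character n) ∧ detOrder V = detOrder W


open Classical in
def Nat.piCompl (π : Set ℕ) (n : ℕ) : ℕ :=
  n.factorization.prod fun p k => if p ∈ π then 1 else p ^ k

open Classical in
lemma Nat.piPart_pos (π : Set ℕ) (n : ℕ) : 0 < Nat.piPart π n := by
  unfold Nat.piPart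
  rw [Finsupp.prod]
  apply Finset.prod_pos
  intro p hp
  have hp' : p.Prime := Nat.prime_of_mem_primeFactors (by simpa using hp)
  split
  · exact pow_pos hp'.pos _
  · exact one_pos

open Classical in
lemma Nat.piCompl_pos (π : Set ℕ) (n : ℕ) : 0 < Nat.piCompl π n := by
  unfold Nat.piCompl
  rw [Finsupp.prod]
  apply Finset.prod_pos
  intro p hp
  have hp' : p.Prime := Nat.prime_of_mem_primeFactors (by simpa using hp)
  split
  · exact one_pos
  · exact pow_pos hp'.pos _

open Classical in
lemma Nat.piPart_mul_piCompl {π : Set ℕ} {n : ℕ} (hn : n ≠ 0) :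
    Nat.piPart π n * Nat.piCompl π n = n := by
  unfold Nat.piPart Nat.piCompl
  rw [Finsupp.prod, Finsupp.prod, ← Finset.prod_mul_distrib]
  conv_rhs => rw [← Nat.factorization_prod_pow_eq_self hn]
  rw [Finsupp.prod]
  apply Finset.prod_congr rfl
  intro p _
  split <;> simp

open Classical in
lemma Nat.prime_mem_of_dvd_piPart {π : Set ℕ} {n p : ℕ} (hp : p.Prime)
    (hd : p ∣ Nat.piPart π n) : p ∈ π := by
  unfold Nat.piPart at hd
  rw [Finsupp.prod] at hd
  obtain ⟨q, hq, hpq⟩ := (hp.prime.dvd_finset_prod_iff _).mp hd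
  by_cases hqπ : q ∈ π
  · rw [if_pos hqπ] at hpq
    have hq' : q.Prime := Nat.prime_of_mem_primeFactors (by simpa using hq)
    rwa [(Nat.prime_dvd_prime_iff_eq hp hq').mp (hp.dvd_of_dvd_pow hpq)]
  · rw [if_neg hqπ] at hpq
    exact absurd (Nat.dvd_one.mp hpq) hp.one_lt.ne'

open Classical in
lemma Nat.prime_not_mem_of_dvd_piCompl {π : Set ℕ} {n p : ℕ} (hp : p.Prime)
    (hd : p ∣ Nat.piCompl π n) : p ∉ π := by
  unfold Nat.piCompl at hd
  rw [Finsupp.prod] at hd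
  obtain ⟨q, hq, hpq⟩ := (hp.prime.dvd_finset_prod_iff _).mp hd
  by_cases hqπ : q ∈ π
  · rw [if_pos hqπ] at hpq
    exact absurd (Nat.dvd_one.mp hpq) hp.one_lt.ne'
  · rw [if_neg hqπ] at hpq
    have hq' : q.Prime := Nat.prime_of_mem_primeFactors (by simpa using hq)
    rwa [(Nat.prime_dvd_prime_iff_eq hp hq').mp (hp.dvd_of_dvd_pow hpq)]

lemma coprime_of_pi {π : Set ℕ} {a b : ℕ} (ha : ∀ p, p.Prime → p ∣ a → p ∈ π)
    (hb : ∀ p, p.Prime → p ∣ b → p ∉ π) : Nat.Coprime a b := by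
  by_contra h
  obtain ⟨p, pp, hpd⟩ := Nat.exists_prime_and_dvd h
  exact hb p pp (hpd.trans (Nat.gcd_dvd_right a b)) (ha p pp (hpd.trans (Nat.gcd_dvd_left a b)))

lemma Nat.div_piPart {π : Set ℕ} {n : ℕ} (hn : n ≠ 0) :
    n / Nat.piPart π n = Nat.piCompl π n := by
  have hab := Nat.piPart_mul_piCompl (π := π) hn
  calc n / Nat.piPart π n
      = (Nat.piPart π n * Nat.piCompl π n) / Nat.piPart π n := by rw [hab]
    _ = _ := Nat.mul_div_cancel_left _ (Nat.piPart_pos π n)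

lemma orderOf_elemPiPart {G : Type} [Group G] (π : Set ℕ) (g : G) (hg : orderOf g ≠ 0) :
    orderOf (elemPiPart π g) = Nat.piPart π (orderOf g) := by
  set n := orderOf g with hn
  set a := Nat.piPart π n with hadef
  set b := Nat.piCompl π n with hbdef
  have hab : a * b = n := Nat.piPart_mul_piCompl hg
  have hcop : Nat.Coprime a b :=
    coprime_of_pi (fun p pp hd => Nat.prime_mem_of_dvd_piPart pp hd)
      (fun p pp hd => Nat.prime_not_mem_of_dvd_piCompl pp hd)
  have ht : 1 ≤ Nat.totient a := Nat.totient_pos.mpr (Nat.piPart_pos π n)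
  have hbpos : 0 < b := Nat.piCompl_pos π n
  have he : (n / a) ^ Nat.totient a = b ^ Nat.totient a := by
    rw [Nat.div_piPart hg]
  unfold elemPiPart
  rw [← hn, ← hadef, he]
  have hepos : b ^ Nat.totient a ≠ 0 := (pow_pos hbpos _).ne'
  rw [orderOf_pow' _ hepos, ← hn]
  have hgcd : Nat.gcd n (b ^ Nat.totient a) = b := by
    conv_lhs => rw [← hab, ← Nat.sub_add_cancel ht, pow_succ]
    rw [Nat.gcd_mul_right, Nat.Coprime.gcd_eq_one (hcop.pow_right _), one_mul]
  rw [hgcd, ← hab, Nat.mul_div_cancel _ hbpos]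

lemma isPiNumber_of_dvd {π : Set ℕ} {m n : ℕ} (h : IsPiNumber π n) (hd : m ∣ n) :
    IsPiNumber π m := fun p pp hp => h p pp (hp.trans hd)

lemma isPiNumber_piPart (π : Set ℕ) (n : ℕ) : IsPiNumber π (Nat.piPart π n) :=
  fun _ pp hd => Nat.prime_mem_of_dvd_piPart pp hd

lemma eq_one_of_pi_pi' {π : Set ℕ} {d : ℕ} (h1 : IsPiNumber π d) (h2 : IsPiNumber πᶜ d)
    (hd : d ≠ 0) : d = 1 := by
  by_contra h
  obtain ⟨p, pp, hpd⟩ := Nat.exists_prime_and_dvd h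
  exact h2 p pp hpd (h1 p pp hpd)

lemma elemPiPart_mem {G : Type} [Group G] [Finite G] (π : Set ℕ) (N : Subgroup G) [hNorm : N.Normal]
    (H : Subgroup G) (hNH : N ≤ H) (hH : IsPiNumber πᶜ (N.relIndex H)) (h : ↥H) :
    elemPiPart π (h : G) ∈ N := by
  set e := (orderOf (h : G) / Nat.piPart π (orderOf (h : G))) ^
      Nat.totient (Nat.piPart π (orderOf (h : G))) with hedef
  have hcoe : ((h ^ e : ↥H) : G) = elemPiPart π (h : G) := by
    simp [elemPiPart, hedef]
  have hx : elemPiPart π (h : G) = ((h ^ e : ↥H) : G) := hcoe.symm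
  rw [hx]
  have hmem : (h ^ e) ∈ N.subgroupOf H → ((h ^ e : ↥H) : G) ∈ N := fun hh => hh
  apply hmem
  haveI : (N.subgroupOf H).Normal := hNorm.subgroupOf H
  rw [← QuotientGroup.eq_one_iff]
  rw [← orderOf_eq_one_iff]
  set q : H ⧸ N.subgroupOf H := QuotientGroup.mk (h ^ e) with hq
  have h1 : orderOf q ∣ orderOf (h ^ e : ↥H) := orderOf_map_dvd (QuotientGroup.mk' _) _
  have h2 : orderOf (h ^ e : ↥H) = orderOf (elemPiPart π (h : G)) := by
    rw [← Subgroup.orderOf_coe, hcoe]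
  have h3 : orderOf (elemPiPart π (h : G)) = Nat.piPart π (orderOf (h : G)) :=
    orderOf_elemPiPart π _ (orderOf_pos _).ne'
  have hpi : IsPiNumber π (orderOf q) := by
    refine isPiNumber_of_dvd (isPiNumber_piPart π (orderOf (h : G))) ?_
    rw [← h3, ← h2]; exact h1
  have hpi' : IsPiNumber πᶜ (orderOf q) := by
    refine isPiNumber_of_dvd hH ?_
    exact orderOf_dvd_natCard q
  exact eq_one_of_pi_pi' hpi hpi' (orderOf_pos q).ne'

section DetOrder


variable {H : Type} [Group H] [Finite H] (V : FDRep ℂ H)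

lemma detOrder_mem : 0 < detOrder V ∧ ∀ h : H, (LinearMap.det (V.ρ h)) ^ detOrder V = 1 := by
  have hne : (Nat.card H) ∈ {m | 0 < m ∧ ∀ h : H, (LinearMap.det (V.ρ h)) ^ m = 1} := by
    constructor
    · exact Nat.card_pos
    · intro h
      rw [← map_pow, ← map_pow, pow_card_eq_one', map_one, map_one]
  exact Nat.sInf_mem (Set.nonempty_of_mem hne)

lemma detOrder_dvd {m : ℕ} (hm0 : 0 < m) (hm : ∀ h : H, (LinearMap.det (V.ρ h)) ^ m = 1) :
    detOrder V ∣ m := by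
  obtain ⟨hd0, hd⟩ := detOrder_mem V
  set d := detOrder V with hddef
  have hg : Nat.gcd d m ∈ {m | 0 < m ∧ ∀ h : H, (LinearMap.det (V.ρ h)) ^ m = 1} := by
    constructor
    · exact Nat.gcd_pos_of_pos_left m hd0
    · intro h
      have h1 : orderOf (LinearMap.det (V.ρ h)) ∣ d := orderOf_dvd_of_pow_eq_one (hd h)
      have h2 : orderOf (LinearMap.det (V.ρ h)) ∣ m := orderOf_dvd_of_pow_eq_one (hm h)
      exact orderOf_dvd_iff_pow_eq_one.mp (Nat.dvd_gcd h1 h2)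
  have hle : d ≤ Nat.gcd d m := Nat.sInf_le hg
  have hge : Nat.gcd d m ≤ d := Nat.le_of_dvd hd0 (Nat.gcd_dvd_left d m)
  have : Nat.gcd d m = d := le_antisymm hge hle
  rw [← this]
  exact Nat.gcd_dvd_right d m

end DetOrder

theorem theta_hat_restricts_to_canonical_extension
    {G : Type} [Group G] [Finite G] (π : Set ℕ) (N : Subgroup G) [N.Normal]
    (hNpi : IsPiNumber π (Nat.card ↥N))
    (θ : ↥N → ℂ) (hθ : IsIrrChar ↥N θ) (hinv : IsGInvariant N θ)
    (θhat : G → ℂ)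
    (hdef : ∀ (g : G), elemPiPart π g ∈ N →
      ∀ φ : ↥(N ⊔ Subgroup.zpowers g) → ℂ,
        IsCanonicalExtension le_sup_left θ φ →
        θhat g = φ ⟨g, Subgroup.mem_sup_right (Subgroup.mem_zpowers g)⟩)
    (hzero : ∀ g : G, elemPiPart π g ∉ N → θhat g = 0)
    (H : Subgroup G) (hNH : N ≤ H) (hH : IsPiNumber πᶜ (N.relIndex H))
    (φ : ↥H → ℂ) (hφ : IsCanonicalExtension hNH θ φ) :
    ∀ h : ↥H, θhat (h : G) = φ h := by
  intro h
  set g : G := (h : G) with hgdef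
  have hgmem : elemPiPart π g ∈ N := elemPiPart_mem π N H hNH hH h
  set K : Subgroup G := N ⊔ Subgroup.zpowers g with hKdef
  have hKH : K ≤ H := sup_le hNH (by rw [Subgroup.zpowers_le]; exact h.2)
  have hNK : N ≤ K := le_sup_left
  obtain ⟨hext, V, W, hφV, hθW, hdet⟩ := hφ
  set φ' : ↥K → ℂ := fun k => φ (Subgroup.inclusion hKH k) with hφ'def
  set V' : FDRep ℂ ↥K := FDRep.of (V.ρ.comp (Subgroup.inclusion hKH)) with hV'def
  set W' : FDRep ℂ ↥N := FDRep.of (V.ρ.comp (Subgroup.inclusion hNH)) with hW'def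
  have hV'ρ : ∀ k : ↥K, V'.ρ k = V.ρ (Subgroup.inclusion hKH k) := fun k => rfl
  have hW'ρ : ∀ n : ↥N, W'.ρ n = V.ρ (Subgroup.inclusion hNH n) := fun n => rfl
  obtain ⟨hA0, hA⟩ := detOrder_mem V
  obtain ⟨hB0, hB⟩ := detOrder_mem V'
  obtain ⟨hC0, hC⟩ := detOrder_mem W'
  have hcan : IsCanonicalExtension (le_sup_left : N ≤ K) θ φ' := by
    refine ⟨?_, V', W', ?_, ?_, ?_⟩
    · intro n
      have heq : Subgroup.inclusion hKH (Subgroup.inclusion hNK n) = Subgroup.inclusion hNH n :=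
        Subtype.ext rfl
      simp only [hφ'def, heq]
      exact hext n
    · intro k
      show φ (Subgroup.inclusion hKH k) = _
      rw [hφV]
      rfl
    · intro n
      rw [← hext n, hφV]
      rfl
    · -- detOrder V' = detOrder W'
      have hBA : detOrder V' ∣ detOrder V :=
        detOrder_dvd V' hA0 (fun k => by rw [hV'ρ]; exact hA _)
      have hCB : detOrder W' ∣ detOrder V' :=
        detOrder_dvd W' hB0 (fun n => by
          have heq : W'.ρ n = V'.ρ (Subgroup.inclusion hNK n) := rfl
          rw [heq]; exact hB _)
      have hWcard : detOrder W ∣ Nat.card ↥N :=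
        detOrder_dvd W Nat.card_pos (fun n => by
          rw [← map_pow, ← map_pow, pow_card_eq_one', map_one, map_one])
      have hApi : IsPiNumber π (detOrder V) := by
        rw [hdet]
        exact fun p pp hd => hNpi p pp (hd.trans hWcard)
      have hAC : detOrder V ∣ detOrder W' := by
        apply detOrder_dvd V hC0
        intro h'
        set z := LinearMap.det (V.ρ h') with hzdef
        have hrA : orderOf z ∣ detOrder V := orderOf_dvd_of_pow_eq_one (hA h')
        have hrpi : IsPiNumber π (orderOf z) := isPiNumber_of_dvd hApi hrA
        set n := orderOf ((h' : G)) with hndef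
        have hn0 : n ≠ 0 := (orderOf_pos _).ne'
        set e := (n / Nat.piPart π n) ^ Nat.totient (Nat.piPart π n) with hedef
        have hxmem : elemPiPart π (h' : G) ∈ N := elemPiPart_mem π N H hNH hH h'
        have hxcoe : ((h' ^ e : ↥H) : G) = elemPiPart π (h' : G) := by
          simp [elemPiPart, hedef, hndef]
        have hinc : Subgroup.inclusion hNH (⟨elemPiPart π (h' : G), hxmem⟩ : ↥N) = h' ^ e :=
          Subtype.ext hxcoe
        have hze : z ^ e = LinearMap.det (W'.ρ ⟨elemPiPart π (h' : G), hxmem⟩) := by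
          rw [hW'ρ, hinc, hzdef, ← map_pow, ← map_pow]
        have hzeC : orderOf z ∣ e * detOrder W' :=
          orderOf_dvd_of_pow_eq_one (by rw [pow_mul, hze]; exact hC _)
        have hre : Nat.Coprime (orderOf z) e := by
          apply coprime_of_pi (fun p pp hd => hrpi p pp hd)
          intro p pp hpe hmem
          rw [hedef, Nat.div_piPart hn0] at hpe
          exact Nat.prime_not_mem_of_dvd_piCompl pp (pp.dvd_of_dvd_pow hpe) hmem
        have hzC : orderOf z ∣ detOrder W' := by
          rw [mul_comm] at hzeC
          exact (Nat.Coprime.dvd_of_dvd_mul_right hre hzeC)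
        exact orderOf_dvd_iff_pow_eq_one.mp hzC
      exact Nat.dvd_antisymm (hBA.trans hAC) hCB
  have hval := hdef g hgmem φ' hcan
  rw [hval, hφ'def]
  exact congrArg φ (Subtype.ext rfl)
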